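/- Let m_0, m_1, m_2, p, q be real numbers satisfying m_0·p·q − m_1·(p + q) + m_2 = 0, and let r > 0. Then there exists a point (p', q') ∈ ℝ² with m_0·p'·q' − m_1·(p' + q') + m_2 = 0 and (p' − p)² + (q' − q)² = r². In particular, the plane algebraic curve m_0·x_1·x_2 − m_1·(x_1 + x_2) + m_2 = 0 passing through a given point meets the boundary circle of every disk centered at that point. -/

import Mathlib

/-- Key lemma: the hyperbola `x*y = a*b` through `(a,b)` meets every circle
centered at `(a,b)`. -/
lemma key (a b r : ℝ) (hr : 0 < r) :
    ∃ a' b' : ℝ, a' * b' = a * b ∧ (a' - a) ^ 2 + (b' - b) ^ 2 = r ^ 2 := by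
  by_cases ha : a = 0
  · subst ha; exact ⟨0, b + r, by ring, by ring⟩
  by_cases hb : b = 0
  · subst hb; exact ⟨a + r, 0, by ring, by ring⟩
  · -- use IVT on f t = a²(t-1)² + b²(1/t-1)² on [1, 1 + r/|a|]
    set T : ℝ := 1 + r / |a| with hT
    clear_value T
    have haT : (0:ℝ) < r / |a| := div_pos hr (abs_pos.mpr ha)
    have h1T : (1:ℝ) ≤ T := by rw [hT]; linarith
    set f : ℝ → ℝ := fun t => a ^ 2 * (t - 1) ^ 2 + b ^ 2 * (1 / t - 1) ^ 2 with hf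
    have hcont : ContinuousOn f (Set.Icc 1 T) := by
      apply ContinuousOn.add
      · fun_prop
      · apply ContinuousOn.mul continuousOn_const
        apply ContinuousOn.pow
        apply ContinuousOn.sub _ continuousOn_const
        apply ContinuousOn.div continuousOn_const continuousOn_id
        intro x hx
        have := hx.1
        positivity
    have hf1 : f 1 = 0 := by simp [hf]
    have hfT : r ^ 2 ≤ f T := by
      have h1 : a ^ 2 * (T - 1) ^ 2 = r ^ 2 := by
        rw [hT]
        rw [show (1 + r / |a| - 1) = r / |a| by ring]
        rw [div_pow, sq_abs]
        field_simp
      have h2 : 0 ≤ b ^ 2 * (1 / T - 1) ^ 2 := by positivity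
      simp only [hf]
      nlinarith [h1, h2]
    have hmem : r ^ 2 ∈ Set.Icc (f 1) (f T) := by
      constructor
      · rw [hf1]; positivity
      · exact hfT
    obtain ⟨t, ht, hft⟩ := intermediate_value_Icc h1T hcont hmem
    have ht0 : (0:ℝ) < t := lt_of_lt_of_le one_pos ht.1
    refine ⟨t * a, b / t, ?_, ?_⟩
    · field_simp
    · have : (t * a - a) ^ 2 + (b / t - b) ^ 2 = f t := by
        simp only [hf]
        field_simp
      rw [this, hft]

/-- The plane curve `m₀x₁x₂ − m₁(x₁+x₂) + m₂ = 0` through a point `(p,q)`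
meets the circle of every radius `r > 0` centered at `(p,q)`. -/
theorem prony_curve_meets_circle
    (m₀ m₁ m₂ p q r : ℝ) (hr : 0 < r)
    (hpq : m₀ * p * q - m₁ * (p + q) + m₂ = 0) :
    ∃ p' q' : ℝ,
      m₀ * p' * q' - m₁ * (p' + q') + m₂ = 0 ∧
      (p' - p) ^ 2 + (q' - q) ^ 2 = r ^ 2 := by
  by_cases hm0 : m₀ = 0
  · subst hm0
    by_cases hm1 : m₁ = 0
    · subst hm1
      exact ⟨p + r, q, by linarith [hpq], by ring⟩
    · -- line p' + q' = (p + q); move along direction (1,-1)/√2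
      have hs2 : (0:ℝ) < Real.sqrt 2 := by positivity
      refine ⟨p + r / Real.sqrt 2, q - r / Real.sqrt 2, by linarith [hpq], ?_⟩
      have h : (r / Real.sqrt 2) ^ 2 = r ^ 2 / 2 := by
        rw [div_pow, Real.sq_sqrt (by norm_num : (2:ℝ) ≥ 0)]
      calc (p + r / Real.sqrt 2 - p) ^ 2 + (q - r / Real.sqrt 2 - q) ^ 2
          = (r / Real.sqrt 2) ^ 2 + (r / Real.sqrt 2) ^ 2 := by ring
        _ = r ^ 2 := by rw [h]; ring
  · -- m₀ ≠ 0 : complete the product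
    set A : ℝ := m₀ * p - m₁ with hA
    set B : ℝ := m₀ * q - m₁ with hB
    obtain ⟨A', B', hAB, hdist⟩ := key A B (|m₀| * r) (by positivity)
    refine ⟨(A' + m₁) / m₀, (B' + m₁) / m₀, ?_, ?_⟩
    · have hABpq : A' * B' = A * B := hAB
      rw [hA, hB] at hABpq
      field_simp
      linear_combination hABpq + m₀ * hpq
    · have e1 : (A' + m₁) / m₀ - p = (A' - A) / m₀ := by
        rw [hA]; field_simp; ring
      have e2 : (B' + m₁) / m₀ - q = (B' - B) / m₀ := by
        rw [hB]; field_simp; ring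
      rw [e1, e2, div_pow, div_pow, ← add_div, hdist]
      rw [mul_pow, sq_abs]
      field_simp
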